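/- Let ℓ be an odd prime and let G be a subgroup of GL₂(ℤ/ℓ²ℤ) such that the determinant map det : G → (ℤ/ℓ²ℤ)^× is surjective. Then the kernel of the reduction-mod-ℓ homomorphism G → GL₂(ℤ/ℓℤ) is nontrivial; that is, there exists g ∈ G with g ≠ 1 whose reduction modulo ℓ is the identity matrix. -/

import Mathlib

lemma ch2 {R : Type*} [CommRing R] (M : Matrix (Fin 2) (Fin 2) R) :
    M * M - M.trace • M + M.det • (1 : Matrix (Fin 2) (Fin 2) R) = 0 := by
  ext i j
  fin_cases i <;> fin_cases j <;>
    simp [Matrix.mul_apply, Fin.sum_univ_two, Matrix.trace_fin_two, Matrix.det_fin_two,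
      Matrix.one_apply] <;> ring

lemma pow_eq_one_of_split {K : Type*} [Field K] {M : Matrix (Fin 2) (Fin 2) K}
    {lam mu : K} (h : (M - lam • 1) * (M - mu • 1) = 0) (hne : lam ≠ mu)
    {m : ℕ} (hl : lam ^ m = 1) (hm : mu ^ m = 1) : M ^ m = 1 := by
  set s := lam - mu with hs_def
  have hs : s ≠ 0 := sub_ne_zero.mpr hne
  set e : Matrix (Fin 2) (Fin 2) K := s⁻¹ • (M - mu • 1) with he_def
  have hMe : M - mu • 1 = s • e := by
    rw [he_def, smul_smul, mul_inv_cancel₀ hs, one_smul]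
  have hBB : (M - mu • 1) * (M - mu • 1) = s • (M - mu • 1) := by
    have hsplit : M - mu • 1 = (M - lam • 1) + s • 1 := by
      rw [hs_def, sub_smul]; abel
    calc (M - mu • 1) * (M - mu • 1) = ((M - lam • 1) + s • 1) * (M - mu • 1) := by rw [← hsplit]
      _ = s • (M - mu • 1) := by rw [add_mul, h, zero_add, smul_mul_assoc, one_mul]
  have hee : e * e = e := by
    rw [he_def, smul_mul_assoc, mul_smul_comm, hBB, smul_smul, smul_smul,
      show s⁻¹ * s⁻¹ * s = s⁻¹ by field_simp]
  have hM : M = lam • e + mu • (1 - e) := by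
    have h2 : lam • e + mu • (1 - e) = s • e + mu • (1 : Matrix (Fin 2) (Fin 2) K) := by
      rw [hs_def]; module
    rw [h2, ← hMe]; abel
  have hfe : (1 - e) * e = 0 := by rw [sub_mul, one_mul, hee, sub_self]
  have hef : e * (1 - e) = 0 := by rw [mul_sub, mul_one, hee, sub_self]
  have hff : (1 - e) * (1 - e) = 1 - e := by
    rw [mul_sub, mul_one, sub_mul, one_mul, hee]; abel
  clear_value e
  have key : ∀ k : ℕ, M ^ k = lam ^ k • e + mu ^ k • (1 - e) := by
    intro k
    induction k with
    | zero => simp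
    | succ k ih =>
      rw [pow_succ, ih, hM]
      simp only [add_mul, mul_add, smul_mul_assoc, mul_smul_comm, hee, hef, hfe, hff,
        smul_zero, add_zero, zero_add, smul_smul]
      rw [pow_succ, pow_succ]
      module
  rw [key m, hl, hm, one_smul, one_smul]; abel


/-- Let `ℓ` be an odd prime and `G ≤ GL₂(ℤ/ℓ²ℤ)` a subgroup on which the
determinant map `det : G → (ℤ/ℓ²ℤ)^×` is surjective. Then the kernel of the reduction-mod-`ℓ`
homomorphism `G → GL₂(ℤ/ℓℤ)` is nontrivial: there is `g ∈ G`, `g ≠ 1`, reducing to the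
identity modulo `ℓ`. -/
theorem statement12 (ℓ : ℕ) (hℓ : ℓ.Prime) (hodd : Odd ℓ)
    (G : Subgroup (GL (Fin 2) (ZMod (ℓ ^ 2))))
    (hdet : ∀ u : (ZMod (ℓ ^ 2))ˣ, ∃ g ∈ G, Matrix.GeneralLinearGroup.det g = u) :
    ∃ g ∈ G, g ≠ 1 ∧
      Matrix.GeneralLinearGroup.map
        (ZMod.castHom (dvd_pow_self ℓ two_ne_zero) (ZMod ℓ)) g = 1 := by
  haveI : Fact ℓ.Prime := ⟨hℓ⟩
  haveI : NeZero (ℓ ^ 2) := ⟨pow_ne_zero 2 hℓ.ne_zero⟩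
  have hℓ2 : ℓ ≠ 2 := by rintro rfl; exact (by norm_num : ¬ Odd 2) hodd
  have hℓ3 : 3 ≤ ℓ := by have := hℓ.two_le; omega
  set φ := ZMod.castHom (dvd_pow_self ℓ two_ne_zero) (ZMod ℓ) with hφ_def
  -- a nonsquare in ZMod ℓ
  obtain ⟨a, ha⟩ := FiniteField.exists_nonsquare (F := ZMod ℓ)
    (by rw [ZMod.ringChar_zmod_n]; exact hℓ2)
  have ha0 : a ≠ 0 := fun h => ha (h ▸ IsSquare.zero)
  -- lift a to a unit u of ZMod ℓ²
  obtain ⟨u, hu⟩ := ZMod.unitsMap_surjective (dvd_pow_self ℓ two_ne_zero) ha0.isUnit.unit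
  have hua : φ (u : ZMod (ℓ ^ 2)) = a := by
    have h1 : ((ZMod.unitsMap (dvd_pow_self ℓ two_ne_zero) u : (ZMod ℓ)ˣ) : ZMod ℓ) = a := by
      rw [hu, IsUnit.unit_spec]
    rwa [ZMod.unitsMap_def, Units.coe_map] at h1
  -- the unit w = 1 + ℓ
  set c : ZMod (ℓ ^ 2) := (ℓ : ZMod (ℓ ^ 2)) with hc_def
  have hc2 : c ^ 2 = 0 := by
    rw [hc_def, ← Nat.cast_pow, ZMod.natCast_self]
  have hcc : c * c = 0 := by rw [← pow_two]; exact hc2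
  set w : (ZMod (ℓ ^ 2))ˣ :=
    ⟨1 + c, 1 - c, by rw [show (1 + c) * (1 - c) = 1 - c ^ 2 by ring, hc2, sub_zero],
      by rw [show (1 - c) * (1 + c) = 1 - c ^ 2 by ring, hc2, sub_zero]⟩ with hw_def
  have hwv : (w : ZMod (ℓ ^ 2)) = 1 + c := rfl
  clear_value w c
  have hwval : ∀ k : ℕ, (1 + c) ^ k = 1 + (k : ZMod (ℓ ^ 2)) * c := by
    intro k
    induction k with
    | zero => simp
    | succ k ih =>
      rw [pow_succ (1 + c) k, ih]
      push_cast
      linear_combination (k : ZMod (ℓ ^ 2)) * hcc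
  have hwpow : w ^ (ℓ - 1) ≠ 1 := by
    intro hw1
    have h1 : (1 : ZMod (ℓ ^ 2)) + ((ℓ - 1 : ℕ) : ZMod (ℓ ^ 2)) * c = 1 := by
      have := congrArg (Units.val) hw1
      rw [Units.val_pow_eq_pow_val, hwv, Units.val_one, hwval (ℓ - 1)] at this
      exact this
    have h2 : (((ℓ - 1) * ℓ : ℕ) : ZMod (ℓ ^ 2)) = 0 := by
      push_cast
      rw [← hc_def]
      linear_combination h1
    rw [ZMod.natCast_eq_zero_iff] at h2
    have h3 : ℓ * ℓ ∣ (ℓ - 1) * ℓ := by rwa [← pow_two]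
    have h4 : ℓ ∣ ℓ - 1 := (Nat.mul_dvd_mul_iff_right (by omega : 0 < ℓ)).mp h3
    have := Nat.le_of_dvd (by omega) h4
    omega
  have hφc : φ c = 0 := by rw [hc_def, map_natCast, ZMod.natCast_self]
  have hφw : φ (w : ZMod (ℓ ^ 2)) = 1 := by
    rw [hwv, map_add, map_one, hφc, add_zero]
  -- choose r with φ r = a and r ^ (ℓ-1) ≠ 1
  obtain ⟨r, hra, hrpow⟩ :
      ∃ r : (ZMod (ℓ ^ 2))ˣ, φ (r : ZMod (ℓ ^ 2)) = a ∧ r ^ (ℓ - 1) ≠ 1 := by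
    rcases eq_or_ne (u ^ (ℓ - 1)) 1 with h1 | h1
    · refine ⟨u * w, ?_, ?_⟩
      · rw [Units.val_mul, map_mul, hua, hφw, mul_one]
      · rw [mul_pow, h1, one_mul]; exact hwpow
    · exact ⟨u, hua, h1⟩
  -- get g and set up for contradiction
  obtain ⟨g, hgG, hgdet⟩ := hdet r
  by_contra hcon
  push_neg at hcon
  have H : ∀ h ∈ G, Matrix.GeneralLinearGroup.map φ h = 1 → h = 1 := by
    intro h hh h1
    by_contra hne
    exact hcon h hh hne h1
  set x := Matrix.GeneralLinearGroup.map φ g with hx_def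
  set X : Matrix (Fin 2) (Fin 2) (ZMod ℓ) := (x : Matrix (Fin 2) (Fin 2) (ZMod ℓ)) with hX_def
  have hXdet : X.det = a := by
    rw [← Matrix.GeneralLinearGroup.val_det_apply, hx_def,
      Matrix.GeneralLinearGroup.map_det, Units.coe_map, hgdet]
    exact hra
  set t : ZMod ℓ := X.trace with ht_def
  have hCH : X * X - t • X + a • (1 : Matrix (Fin 2) (Fin 2) (ZMod ℓ)) = 0 := by
    have := ch2 X
    rwa [hXdet] at this
  by_cases hδ : t ^ 2 - 4 * a = 0
  · -- repeated root case: a is a square, contradiction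
    have h2ℓ : (2 : ZMod ℓ) ≠ 0 := by
      intro h
      have h' : ((2 : ℕ) : ZMod ℓ) = 0 := by push_cast; exact h
      rw [ZMod.natCast_eq_zero_iff] at h'
      have := Nat.le_of_dvd (by norm_num) h'
      omega
    exact ha ⟨t * 2⁻¹, by field_simp; linear_combination -hδ⟩
  · -- distinct roots over GF(ℓ²)
    set K := GaloisField ℓ 2 with hK_def
    haveI : Fintype K := Fintype.ofFinite K
    have hcard : Fintype.card K = ℓ ^ 2 := by
      rw [← Nat.card_eq_fintype_card]; exact GaloisField.card ℓ 2 two_ne_zero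
    set ψ : ZMod ℓ →+* K := (algebraMap (ZMod ℓ) K : ZMod ℓ →+* K) with hψ_def
    have hψinj : Function.Injective ψ := ψ.injective
    have hcharK : ringChar K = ℓ := ringChar.eq K ℓ
    have hδK : ψ (t ^ 2 - 4 * a) ≠ 0 := fun h => hδ (hψinj (by rw [h, map_zero]))
    have hsq : IsSquare (ψ (t ^ 2 - 4 * a)) := by
      rw [FiniteField.isSquare_iff (by rw [hcharK]; exact hℓ2) hδK]
      obtain ⟨j, hj⟩ := hodd
      have harith : Fintype.card K / 2 = (ℓ - 1) * ((ℓ + 1) / 2) := by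
        rw [hcard]
        subst hj
        have e1 : (2 * j + 1) ^ 2 = 2 * (2 * j * (j + 1)) + 1 := by ring
        have e2 : (2 * j + 1 - 1) * ((2 * j + 1 + 1) / 2) = 2 * j * (j + 1) := by
          have h3 : (2 * j + 1 + 1) / 2 = j + 1 := by omega
          rw [h3, show 2 * j + 1 - 1 = 2 * j from rfl]
        rw [e1, e2]
        set m := 2 * j * (j + 1) with hm_def
        omega
      rw [harith, pow_mul, ← map_pow,
        ZMod.pow_card_sub_one_eq_one (a := t ^ 2 - 4 * a) hδ, map_one, one_pow]
    obtain ⟨s, hs⟩ := hsq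
    have hs0 : s ≠ 0 := by
      intro h
      rw [h, mul_zero] at hs
      exact hδK hs
    set Y : Matrix (Fin 2) (Fin 2) K := X.map ψ with hY_def
    have htrY : Y.trace = ψ t := by
      simp [hY_def, Matrix.trace, Matrix.map_apply, map_sum, ht_def, Matrix.diag]
    have hdetY : Y.det = ψ a := by
      show (ψ.mapMatrix X).det = ψ a
      rw [← RingHom.map_det, hXdet]
    have hCHK : Y * Y - (ψ t) • Y + (ψ a) • (1 : Matrix (Fin 2) (Fin 2) K) = 0 := by
      have := ch2 Y
      rwa [htrY, hdetY] at this
    have h2K : (2 : K) ≠ 0 := by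
      intro h
      have h' : ((2 : ℕ) : K) = 0 := by push_cast; exact h
      rw [CharP.cast_eq_zero_iff K ℓ 2] at h'
      have := Nat.le_of_dvd (by norm_num) h'
      omega
    set lam : K := (ψ t + s) * 2⁻¹ with hlam_def
    set mu : K := (ψ t - s) * 2⁻¹ with hmu_def
    have hs' : s * s = ψ t ^ 2 - 4 * ψ a := by
      rw [← hs]
      rw [map_sub, map_mul, map_pow, map_ofNat]
    have h2i : (2 : K) * 2⁻¹ = 1 := mul_inv_cancel₀ h2K
    have hsum : lam + mu = ψ t := by rw [hlam_def, hmu_def]; linear_combination (ψ t) * h2i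
    have hprod : lam * mu = ψ a := by
      rw [hlam_def, hmu_def]
      linear_combination (-((2 : K)⁻¹) ^ 2) * hs' + ψ a * (2 * 2⁻¹ + 1) * h2i
    have hdiff : lam - mu = s := by rw [hlam_def, hmu_def]; linear_combination s * h2i
    have hne : lam ≠ mu := by
      intro h
      apply hs0
      rw [← hdiff, h, sub_self]
    have hfact : (Y - lam • 1) * (Y - mu • 1) = 0 := by
      have expand : (Y - lam • 1) * (Y - mu • 1)
          = Y * Y - (lam + mu) • Y + (lam * mu) • (1 : Matrix (Fin 2) (Fin 2) K) := by
        simp only [sub_mul, mul_sub, smul_mul_assoc, mul_smul_comm, one_mul, mul_one,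
          smul_smul, add_smul]
        module
      rw [expand, hsum, hprod]
      exact hCHK
    have hψa : ψ a ≠ 0 := fun h => ha0 (hψinj (by rw [h, map_zero]))
    have hlam0 : lam ≠ 0 := by
      intro h; apply hψa; rw [← hprod, h, zero_mul]
    have hmu0 : mu ≠ 0 := by
      intro h; apply hψa; rw [← hprod, h, mul_zero]
    have hl : lam ^ (ℓ ^ 2 - 1) = 1 := by
      have := FiniteField.pow_card_sub_one_eq_one lam hlam0
      rwa [hcard] at this
    have hm : mu ^ (ℓ ^ 2 - 1) = 1 := by
      have := FiniteField.pow_card_sub_one_eq_one mu hmu0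
      rwa [hcard] at this
    have hY1 : Y ^ (ℓ ^ 2 - 1) = 1 := pow_eq_one_of_split hfact hne hl hm
    have hX1 : X ^ (ℓ ^ 2 - 1) = 1 := by
      apply Matrix.map_injective hψinj
      show (X ^ (ℓ ^ 2 - 1)).map ψ = (1 : Matrix (Fin 2) (Fin 2) (ZMod ℓ)).map ψ
      have e1 : (X ^ (ℓ ^ 2 - 1)).map ψ = ψ.mapMatrix (X ^ (ℓ ^ 2 - 1)) := rfl
      have e2 : (1 : Matrix (Fin 2) (Fin 2) (ZMod ℓ)).map ψ
          = ψ.mapMatrix (1 : Matrix (Fin 2) (Fin 2) (ZMod ℓ)) := rfl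
      rw [e1, e2, map_pow, map_one]
      exact hY1
    have hx1 : x ^ (ℓ ^ 2 - 1) = 1 := by
      apply Units.ext
      rw [Units.val_pow_eq_pow_val, Units.val_one]
      exact hX1
    have hg1 : g ^ (ℓ ^ 2 - 1) = 1 := by
      apply H _ (pow_mem hgG _)
      rw [map_pow, ← hx_def]
      exact hx1
    have hr1 : r ^ (ℓ ^ 2 - 1) = 1 := by
      rw [← hgdet, ← map_pow, hg1, map_one]
    have hcardu : Fintype.card (ZMod (ℓ ^ 2))ˣ = ℓ * (ℓ - 1) := by
      rw [ZMod.card_units_eq_totient, Nat.totient_prime_pow hℓ (by norm_num), pow_one]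
    have hr2 : r ^ (ℓ * (ℓ - 1)) = 1 := by
      rw [← hcardu]; exact pow_card_eq_one
    have hd1 : orderOf r ∣ ℓ ^ 2 - 1 := orderOf_dvd_of_pow_eq_one hr1
    have hd2 : orderOf r ∣ ℓ * (ℓ - 1) := orderOf_dvd_of_pow_eq_one hr2
    have hfactor : ℓ ^ 2 - 1 = (ℓ + 1) * (ℓ - 1) := by
      obtain ⟨k, rfl⟩ : ∃ k, ℓ = k + 1 := ⟨ℓ - 1, by omega⟩
      have e1 : (k + 1) ^ 2 = k * k + 2 * k + 1 := by ring
      have e2 : (k + 1 + 1) * (k + 1 - 1) = k * k + 2 * k := by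
        have : k + 1 - 1 = k := rfl
        rw [this]; ring
      rw [e1, e2]
      set m := k * k with hm_def
      omega
    have hgcd : Nat.gcd ((ℓ + 1) * (ℓ - 1)) (ℓ * (ℓ - 1)) = ℓ - 1 := by
      rw [Nat.gcd_mul_right]
      have : Nat.gcd (ℓ + 1) ℓ = 1 := by
        rw [Nat.gcd_self_add_left ℓ 1, Nat.gcd_one_left]
      rw [this, one_mul]
    have hdvd : orderOf r ∣ ℓ - 1 := by
      rw [hfactor] at hd1
      have := Nat.dvd_gcd hd1 hd2
      rwa [hgcd] at this
    exact hrpow (orderOf_dvd_iff_pow_eq_one.mp hdvd)
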